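/- Let D be a DAG with n vertices and comb(D) the DAG obtained by the comb construction (adding a directed path u₁ → ⋯ → uₙ and arcs vᵢ → uᵢ for a topological ordering v₁,…,vₙ of D). Then there is a strategy solving the Regression Search Problem on comb(D) (with 2n candidate faulty vertices) using at most ⌈log₂(2n)⌉ queries in the worst case, and this is optimal. -/

import Mathlib

/-- A strategy is a binary decision tree: internal nodes are queried vertices,
leaves identify the faulty vertex. -/
inductive Strategy (V : Type) : Type where
  | leaf : V → Strategy V
  | node : V → Strategy V → Strategy V → Strategy V

namespace Strategy

/-- The worst-case number of queries of a strategy is the height of the tree. -/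
def height {V : Type} : Strategy V → ℕ
  | leaf _ => 0
  | node _ l r => 1 + max l.height r.height

open Classical in
/-- Running a strategy: `anc u v` means `u` is an ancestor of `v` (including `u = v`).
A query of `q` answers "bugged" (left subtree) iff the faulty vertex `f` is an ancestor
of `q`, and "clean" (right subtree) otherwise. The result is the vertex identified at
the reached leaf. -/
noncomputable def run {V : Type} (anc : V → V → Prop) : Strategy V → V → V
  | leaf v, _ => v
  | node q l r, f => if anc f q then run anc l f else run anc r f

def leaves {V : Type} : Strategy V → List V
  | leaf v => [v]
  | node _ l r => l.leaves ++ r.leaves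

lemma length_leaves_le {V : Type} (s : Strategy V) : s.leaves.length ≤ 2 ^ s.height := by
  induction s with
  | leaf v => simp [leaves, height]
  | node q l r ihl ihr =>
    simp only [leaves, height, List.length_append]
    calc l.leaves.length + r.leaves.length ≤ 2 ^ l.height + 2 ^ r.height := by omega
      _ ≤ 2 ^ (max l.height r.height) + 2 ^ (max l.height r.height) := by
          gcongr <;> simp [Nat.pow_le_pow_right] <;> omega
      _ = 2 ^ (1 + max l.height r.height) := by ring
  
lemma run_mem_leaves {V : Type} (anc : V → V → Prop) (s : Strategy V) (f : V) :
    s.run anc f ∈ s.leaves := by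
  induction s with
  | leaf v => simp [run, leaves]
  | node q l r ihl ihr =>
    simp only [run, leaves, List.mem_append]
    split
    · exact Or.inl (ihl)
    · exact Or.inr (ihr)

end Strategy


/-- The comb construction on a DAG on `Fin n` given in topological ordering:
`inl i` is `vᵢ`, `inr i` is `uᵢ`; arcs of `D`, arcs `vᵢ → uᵢ`, arcs `uᵢ → uᵢ₊₁`. -/
def combE {n : ℕ} (E : Fin n → Fin n → Prop) : (Fin n ⊕ Fin n) → (Fin n ⊕ Fin n) → Prop
  | .inl i, .inl j => E i j
  | .inl i, .inr j => i = j
  | .inr i, .inr j => (i : ℕ) + 1 = (j : ℕ)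
  | .inr _, .inl _ => False

namespace CombProof

def sidx {n : ℕ} : Fin n ⊕ Fin n → ℕ := Sum.elim (·.val) (·.val)

variable {n : ℕ} {E : Fin n → Fin n → Prop}

lemma step_mono (htopo : ∀ i j : Fin n, E i j → i < j) {u v} (h : combE E u v) :
    sidx u ≤ sidx v := by
  cases u <;> cases v <;> simp_all [combE, sidx]
  · exact (htopo _ _ h).le
  · omega

lemma anc_mono (htopo : ∀ i j : Fin n, E i j → i < j) {u v}
    (h : Relation.ReflTransGen (combE E) u v) : sidx u ≤ sidx v := by
  induction h with
  | refl => exact le_refl _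
  | tail _ hstep ih => exact ih.trans (step_mono htopo hstep)

lemma inr_reaches {i : Fin n} {q} (h : Relation.ReflTransGen (combE E) (.inr i) q) :
    ∃ j, q = Sum.inr j := by
  induction h with
  | refl => exact ⟨i, rfl⟩
  | tail _ hstep ih =>
    obtain ⟨j, rfl⟩ := ih
    rename_i c _
    cases c with
    | inl k => exact absurd hstep (by simp [combE])
    | inr k => exact ⟨k, rfl⟩

lemma chain {i m : Fin n} (h : (i : ℕ) ≤ (m : ℕ)) :
    Relation.ReflTransGen (combE E) (.inr i) (.inr m) := by
  obtain ⟨k, hk⟩ := Nat.le.dest h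
  induction k generalizing m with
  | zero => have : i = m := Fin.ext (by omega); subst this; rfl
  | succ k ih =>
    have hlt : (i : ℕ) + k < n := by omega
    have := ih (m := ⟨i + k, hlt⟩) (by simp) (by simp)
    exact this.tail (by simp [combE]; omega)

lemma anc_inr (htopo : ∀ i j : Fin n, E i j → i < j) (f : Fin n ⊕ Fin n) (m : Fin n) :
    Relation.ReflTransGen (combE E) f (.inr m) ↔ sidx f ≤ (m : ℕ) := by
  constructor
  · exact anc_mono htopo
  · intro h
    cases f with
    | inl i =>
      exact (Relation.ReflTransGen.single (show combE E (.inl i) (.inr i) from rfl)).trans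
        (chain h)
    | inr i => exact chain h

def search (n : ℕ) (hn : 0 < n) : ℕ → ℕ → Strategy (Fin n ⊕ Fin n)
  | lo, s =>
    if h : s ≤ 1 then
      .node (.inl ⟨lo % n, Nat.mod_lt lo hn⟩)
        (.leaf (.inl ⟨lo % n, Nat.mod_lt lo hn⟩))
        (.leaf (.inr ⟨lo % n, Nat.mod_lt lo hn⟩))
    else
      .node (.inr ⟨(lo + (s+1)/2 - 1) % n, Nat.mod_lt _ hn⟩)
        (search n hn lo ((s+1)/2))
        (search n hn (lo + (s+1)/2) (s - (s+1)/2))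
  termination_by lo s => s
  decreasing_by all_goals omega

lemma search_height (hn : 0 < n) : ∀ s lo, 1 ≤ s →
    (search n hn lo s).height ≤ Nat.clog 2 s + 1 := by
  intro s
  induction s using Nat.strong_induction_on with
  | _ s ih =>
  intro lo hs
  rw [search]
  split
  · simp [Strategy.height]
  · rename_i h
    have h2 : 2 ≤ s := by omega
    have hs1 : 1 ≤ (s+1)/2 := by omega
    have hlt1 : (s+1)/2 < s := by omega
    have hlt2 : s - (s+1)/2 < s := by omega
    have hle : s - (s+1)/2 ≤ (s+1)/2 := by omega
    have e1 := ih _ hlt1 lo hs1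
    have e2 := ih _ hlt2 (lo + (s+1)/2) (by omega)
    have e3 : Nat.clog 2 (s - (s+1)/2) ≤ Nat.clog 2 ((s+1)/2) := Nat.clog_mono_right _ hle
    have e4 : Nat.clog 2 s = Nat.clog 2 ((s+1)/2) + 1 := by
      rw [Nat.clog_of_two_le (by norm_num) h2]
      have : (s + 2 - 1) / 2 = (s+1)/2 := by omega
      rw [this]
    simp only [Strategy.height]
    omega

lemma search_run (hn : 0 < n) (htopo : ∀ i j : Fin n, E i j → i < j) :
    ∀ s lo, 1 ≤ s → lo + s ≤ n → ∀ f : Fin n ⊕ Fin n,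
      lo ≤ sidx f → sidx f < lo + s →
      (search n hn lo s).run (fun u v => Relation.ReflTransGen (combE E) u v) f = f := by
  intro s
  induction s using Nat.strong_induction_on with
  | _ s ih =>
  intro lo hs hn' f hlo hhi
  rw [search]
  split
  · -- s = 1
    rename_i h
    have hseq : s = 1 := by omega
    have hlolt : lo < n := by omega
    have hmod : lo % n = lo := Nat.mod_eq_of_lt hlolt
    have hf : sidx f = lo := by omega
    cases f with
    | inl i =>
      have : i = ⟨lo % n, Nat.mod_lt lo hn⟩ := Fin.ext (by simp [sidx] at hf; simp; omega)
      subst this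
      simp [Strategy.run, Relation.ReflTransGen.refl]
    | inr i =>
      have hi : (i : ℕ) = lo % n := by simp [sidx] at hf; omega
      have : ¬ Relation.ReflTransGen (combE E) (.inr i) (.inl ⟨lo % n, Nat.mod_lt lo hn⟩) := by
        intro hcon
        obtain ⟨j, hj⟩ := inr_reaches hcon
        simp at hj
      simp [Strategy.run, this]
      exact Fin.ext hi.symm
  · rename_i h
    have h2 : 2 ≤ s := by omega
    set s₁ := (s+1)/2 with hs₁
    have hmid : lo + s₁ - 1 < n := by omega
    have hmod : (lo + s₁ - 1) % n = lo + s₁ - 1 := Nat.mod_eq_of_lt hmid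
    simp only [Strategy.run]
    have key : Relation.ReflTransGen (combE E) f
        (Sum.inr ⟨(lo + (s+1)/2 - 1) % n, Nat.mod_lt _ hn⟩) ↔ sidx f ≤ lo + s₁ - 1 := by
      rw [anc_inr htopo]
      simp [← hs₁, hmod]
    simp only [key]
    split_ifs with hcond
    · exact ih s₁ (by omega) lo (by omega) (by omega) f hlo (by omega)
    · exact ih (s - s₁) (by omega) (lo + s₁) (by omega) (by omega) f (by omega) (by omega)

end CombProof


open CombProof in
theorem comb_optimal_strategy (n : ℕ) (hn : 1 ≤ n) (E : Fin n → Fin n → Prop)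
    (htopo : ∀ i j : Fin n, E i j → i < j) :
    (∃ s : Strategy (Fin n ⊕ Fin n),
      (∀ f, s.run (fun u v => Relation.ReflTransGen (combE E) u v) f = f) ∧
      s.height ≤ Nat.clog 2 (2 * n)) ∧
    (∀ s : Strategy (Fin n ⊕ Fin n),
      (∀ f, s.run (fun u v => Relation.ReflTransGen (combE E) u v) f = f) →
      Nat.clog 2 (2 * n) ≤ s.height) := by
  have hclog : Nat.clog 2 (2 * n) = Nat.clog 2 n + 1 := by
    rw [Nat.clog_of_two_le (by norm_num) (by omega)]
    congr 1
    · congr 1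
      omega
  constructor
  · refine ⟨search n hn 0 n, ?_, ?_⟩
    · intro f
      refine search_run hn htopo n 0 hn (by omega) f (by omega) ?_
      cases f <;> simp [sidx]
    · rw [hclog]
      exact search_height hn n 0 hn
  · intro s hcorrect
    have hmem : ∀ f : Fin n ⊕ Fin n, f ∈ s.leaves := by
      intro f
      have := Strategy.run_mem_leaves (fun u v => Relation.ReflTransGen (combE E) u v) s f
      rwa [hcorrect f] at this
    have hcard : 2 * n ≤ s.leaves.length := by
      have hsub : (Finset.univ : Finset (Fin n ⊕ Fin n)) ⊆ s.leaves.toFinset := by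
        intro f _; simpa using hmem f
      have := Finset.card_le_card hsub
      simp [Fintype.card_sum] at this
      have h2 := List.toFinset_card_le s.leaves
      omega
    have : 2 * n ≤ 2 ^ s.height := hcard.trans (Strategy.length_leaves_le s)
    exact (Nat.clog_le_iff_le_pow (by norm_num)).mpr this
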